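/- Suppose A = {a₁, …, a_{3m}} with Σ s(aᵢ) = mB and B/4 < s(aᵢ) < B/2 admits a partition into m disjoint triples each summing to B. Then the trace constructed in the reduction (with processes P_{aᵢ} consisting of Wxa' followed by s(aᵢ) copies of Wxb' followed by Wxc'; auxiliary processes of 3m writes Wxa, mB writes Wxb, 3m writes Wxc; and P₀ consisting of m slot sequences each being (Rxa Rxa')³ followed by (Rxb Rxb')^B followed by (Rxc Rxc')³) admits a legal schedule respecting program order. -/

import Mathlib

/-- An operation: a read or write on variable `var` with value `val` (the issuing
process is given by the position of the operation in the trace). -/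
structure Op where
  isRead : Bool
  var : ℕ
  val : ℕ
deriving DecidableEq

/-- Write of value `v` to the single shared variable `x` (variable `0`). -/
def Wr (v : ℕ) : Op := ⟨false, 0, v⟩

/-- Read of value `v` from the single shared variable `x` (variable `0`). -/
def Rd (v : ℕ) : Op := ⟨true, 0, v⟩

/-- Values `a, a', b, b', c, c'` are the six distinct integers `1,…,6`. -/
def va : ℕ := 1
def va' : ℕ := 2
def vb : ℕ := 3
def vb' : ℕ := 4
def vc : ℕ := 5
def vc' : ℕ := 6

/-- Open subsequence `Rxa Rxa' Rxa Rxa' Rxa Rxa'`. -/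
def openSeq : List Op := [Rd va, Rd va', Rd va, Rd va', Rd va, Rd va']

/-- Sum subsequence `(Rxb Rxb')^B`. -/
def sumSeq (B : ℕ) : List Op := (List.replicate B [Rd vb, Rd vb']).flatten

/-- Close subsequence `Rxc Rxc' Rxc Rxc' Rxc Rxc'`. -/
def closeSeq : List Op := [Rd vc, Rd vc', Rd vc, Rd vc', Rd vc, Rd vc']

/-- The read-only process `P₀`: `m` slot sequences. -/
def P0 (m B : ℕ) : List Op := (List.replicate m (openSeq ++ sumSeq B ++ closeSeq)).flatten

/-- Process `P_{aᵢ}`: `Wxa'`, then `s(aᵢ)` copies of `Wxb'`, then `Wxc'`. -/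
def Pa (sz : ℕ) : List Op := Wr va' :: (List.replicate sz (Wr vb') ++ [Wr vc'])

/-- The trace of the reduction from Unary 3-Partition: `P₀`, the processes
`P_{a₁},…,P_{a_{3m}}`, and the auxiliary processes `P_{c₁} = (Wxa)^{3m}`,
`P_{c₂} = (Wxb)^{mB}`, `P_{c₃} = (Wxc)^{3m}`. -/
def reductionTrace (m B : ℕ) (s : Fin (3 * m) → ℕ) : List (List Op) :=
  P0 m B :: (List.ofFn (fun i => Pa (s i)) ++
    [List.replicate (3 * m) (Wr va), List.replicate (m * B) (Wr vb),
     List.replicate (3 * m) (Wr vc)])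

/-- A position of an operation in a trace: a process index and an index in that
process's sequence. -/
def Pos (procs : List (List Op)) : Type := Σ i : Fin procs.length, Fin ((procs.get i).length)

/-- The operation at a position of the trace. -/
def opAt {procs : List (List Op)} (p : Pos procs) : Op := (procs.get p.1).get p.2

/-- `σ` numbers the operations of the trace as a legal schedule respecting program
order: it is injective, operations of the same process keep their order, and every
read reads the value of the latest preceding write on the same variable. -/
def LegalSched (procs : List (List Op)) (σ : Pos procs → ℕ) : Prop :=
  Function.Injective σ ∧
  (∀ p q : Pos procs, p.1.val = q.1.val → p.2.val < q.2.val → σ p < σ q) ∧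
  (∀ p : Pos procs, (opAt p).isRead = true →
    ∃ q : Pos procs, (opAt q).isRead = false ∧ σ q < σ p ∧
      (opAt q).var = (opAt p).var ∧ (opAt q).val = (opAt p).val ∧
      ∀ q' : Pos procs, (opAt q').isRead = false → (opAt q').var = (opAt p).var →
        σ q < σ q' → ¬ σ q' < σ p)

/-- A solution of the 3-Partition instance: an assignment of the `3m` elements to `m`
triples, each summing to `B`. -/
def ThreePartSol (m B : ℕ) (s : Fin (3 * m) → ℕ) : Prop :=
  ∃ f : Fin (3 * m) → Fin m,
    (∀ j : Fin m, (Finset.univ.filter (fun i => f i = j)).card = 3) ∧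
    (∀ j : Fin m, ∑ i ∈ Finset.univ.filter (fun i => f i = j), s i = B)

-- length of flatten of replicate
lemma len_flat_rep (l : List Op) (n : ℕ) : (List.replicate n l).flatten.length = n * l.length := by
  induction n with
  | zero => simp
  | succ n ih => simp [List.replicate_succ, ih, Nat.succ_mul, Nat.add_comm]

lemma flat_rep_getElem? (l : List Op) (hl : 0 < l.length) (n k : ℕ) (h : k < n * l.length) :
    (List.replicate n l).flatten[k]? = l[k % l.length]? := by
  induction n generalizing k with
  | zero => omega
  | succ n ih =>
    rw [List.replicate_succ, List.flatten_cons]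
    by_cases hk : k < l.length
    · rw [List.getElem?_append_left hk, Nat.mod_eq_of_lt hk]
    · push_neg at hk
      rw [List.getElem?_append_right hk, ih (k - l.length) (by rw [Nat.succ_mul] at h; omega),
        ← Nat.mod_eq_sub_mod hk]

def slotLen (B : ℕ) : ℕ := 2*B + 12

def slotOp (B u : ℕ) : Op :=
  if u < 6 then (if u % 2 = 0 then Rd va else Rd va')
  else if u < 6 + 2*B then (if u % 2 = 0 then Rd vb else Rd vb')
  else (if u % 2 = 0 then Rd vc else Rd vc')

lemma sumSeq_len (B : ℕ) : (sumSeq B).length = 2*B := by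
  simp [sumSeq, len_flat_rep, Nat.mul_comm]

lemma slot_len (B : ℕ) : (openSeq ++ sumSeq B ++ closeSeq).length = slotLen B := by
  simp [openSeq, closeSeq, sumSeq_len, slotLen]

lemma slot_getElem? (B u : ℕ) (hu : u < slotLen B) :
    (openSeq ++ sumSeq B ++ closeSeq)[u]? = some (slotOp B u) := by
  by_cases h6 : u < 6
  · rw [List.getElem?_append_left (by rw [List.length_append]; simp [openSeq]; omega),
      List.getElem?_append_left (by simp [openSeq]; omega)]
    interval_cases u <;> rfl
  · by_cases hs : u < 6 + 2*B
    · rw [List.getElem?_append_left (by rw [List.length_append]; simp [openSeq, sumSeq_len]; omega),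
        List.getElem?_append_right (by simp [openSeq]; omega)]
      have hop : openSeq.length = 6 := by simp [openSeq]
      rw [hop, sumSeq, flat_rep_getElem? _ (by simp) _ _ (by simp; omega)]
      have h2 : (u - 6) % ([Rd vb, Rd vb'] : List Op).length = u % 2 := by simp; omega
      rw [h2]
      unfold slotOp
      rcases Nat.mod_two_eq_zero_or_one u with h | h <;> simp [h, h6, hs]
    · rw [List.getElem?_append_right (by rw [List.length_append]; simp [openSeq, sumSeq_len]; omega)]
      have hlen : (openSeq ++ sumSeq B).length = 6 + 2*B := by
        rw [List.length_append, sumSeq_len]; simp [openSeq]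
      rw [hlen]
      have hu2 : (u - (6+2*B)) % 2 = u % 2 := by omega
      unfold slotOp
      have hw : u - (6+2*B) < 6 := by simp [slotLen] at hu; omega
      set w := u - (6+2*B) with hwdef
      have : u % 2 = w % 2 := by omega
      rw [this]
      interval_cases w <;> simp [closeSeq, hs, h6]

lemma P0_getElem? (m B k : ℕ) (h : k < m * slotLen B) :
    (P0 m B)[k]? = some (slotOp B (k % slotLen B)) := by
  rw [P0, flat_rep_getElem? _ (by rw [slot_len]; simp [slotLen]) _ _ (by rw [slot_len]; exact h),
    slot_len, slot_getElem? _ _ (Nat.mod_lt _ (by simp [slotLen]))]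

lemma P0_len (m B : ℕ) : (P0 m B).length = m * slotLen B := by
  rw [P0, len_flat_rep, slot_len]


lemma Pa_len (sz : ℕ) : (Pa sz).length = sz + 2 := by simp [Pa]

lemma Pa_getElem? (sz k : ℕ) (hk : k < sz + 2) :
    (Pa sz)[k]? = some (if k = 0 then Wr va' else if k ≤ sz then Wr vb' else Wr vc') := by
  rcases k with _ | k
  · simp [Pa]
  · rw [Pa, List.getElem?_cons_succ]
    by_cases h : k < sz
    · rw [List.getElem?_append_left (by simpa using h)]
      simp only [List.getElem?_replicate, if_pos h]
      simp [Nat.succ_le_of_lt h]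
    · rw [List.getElem?_append_right (by simpa using h)]
      have : k = sz := by omega
      subst this
      simp

section Trace
variable {m B : ℕ} (s : Fin (3*m) → ℕ)

lemma trace_len : (reductionTrace m B s).length = 3*m+4 := by
  simp [reductionTrace]

lemma trace_get0 : (reductionTrace m B s)[0]? = some (P0 m B) := by simp [reductionTrace]

lemma trace_getPa (i : Fin (3*m)) : (reductionTrace m B s)[1+i.val]? = some (Pa (s i)) := by
  rw [reductionTrace, show 1+i.val = i.val+1 from by omega, List.getElem?_cons_succ,
    List.getElem?_append_left (by simpa using i.isLt), List.getElem?_ofFn]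
  simp [List.ofFnNthVal, i.isLt]

lemma trace_getA : (reductionTrace m B s)[3*m+1]? = some (List.replicate (3*m) (Wr va)) := by
  rw [reductionTrace, List.getElem?_cons_succ,
    List.getElem?_append_right (by simp)]
  simp

lemma trace_getB : (reductionTrace m B s)[3*m+2]? = some (List.replicate (m*B) (Wr vb)) := by
  rw [reductionTrace, show 3*m+2 = (3*m+1)+1 from rfl, List.getElem?_cons_succ,
    List.getElem?_append_right (by simp)]
  simp

lemma trace_getC : (reductionTrace m B s)[3*m+3]? = some (List.replicate (3*m) (Wr vc)) := by
  rw [reductionTrace, show 3*m+3 = (3*m+2)+1 from rfl, List.getElem?_cons_succ,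
    List.getElem?_append_right (by simp)]
  simp [show 3*m+2-(3*m) = 2 from by omega]

end Trace

lemma proc_at (procs : List (List Op)) (i : Fin procs.length) (l : List Op)
    (h : procs[i.val]? = some l) : procs.get i = l := by
  obtain ⟨_, h2⟩ := List.getElem?_eq_some_iff.mp h
  simpa [List.get_eq_getElem] using h2

lemma pos_len {procs : List (List Op)} (p : Pos procs) (l : List Op)
    (h : procs[p.1.val]? = some l) : p.2.val < l.length := by
  obtain ⟨i, kv, hkv⟩ := p
  have h1 := proc_at procs i l h
  subst h1
  exact hkv

lemma opAt_eq {procs : List (List Op)} (p : Pos procs) (l : List Op)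
    (h : procs[p.1.val]? = some l) (o : Op) (ho : l[p.2.val]? = some o) : opAt p = o := by
  obtain ⟨i, kv, hkv⟩ := p
  have h1 := proc_at procs i l h
  subst h1
  obtain ⟨_, h3⟩ := List.getElem?_eq_some_iff.mp ho
  exact h3

def mkPos (procs : List (List Op)) (n k : ℕ) (hn : n < procs.length)
    (hk : k < (procs.get ⟨n, hn⟩).length) : Pos procs := ⟨⟨n, hn⟩, ⟨k, hk⟩⟩

section Fiber
variable {m B : ℕ} (s : Fin (3*m) → ℕ) (f : Fin (3*m) → Fin m)

def fib (j : Fin m) : Finset (Fin (3*m)) := Finset.univ.filter (fun i => f i = j)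

def prd (i : Fin (3*m)) : Finset (Fin (3*m)) :=
  Finset.univ.filter (fun i' => f i' = f i ∧ i' < i)

def rk (i : Fin (3*m)) : ℕ := (prd f i).card

def off (i : Fin (3*m)) : ℕ := ∑ i' ∈ prd f i, s i'

variable (hf3 : ∀ j : Fin m, (Finset.univ.filter (fun i => f i = j)).card = 3)
variable (hfs : ∀ j : Fin m, ∑ i ∈ Finset.univ.filter (fun i => f i = j), s i = B)

lemma prd_sub (i : Fin (3*m)) : prd f i ⊆ fib f (f i) \ {i} := by
  intro x hx
  simp [prd] at hx
  simp [fib, hx.1]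
  exact Fin.ne_of_lt hx.2

include hf3 in
lemma rk_le (i : Fin (3*m)) : rk f i ≤ 2 := by
  have h1 := Finset.card_le_card (prd_sub f i)
  have h2 : i ∈ fib f (f i) := by simp [fib]
  rw [Finset.card_sdiff_of_subset (by simpa using h2), Finset.card_singleton] at h1
  unfold rk
  have := hf3 (f i)
  rw [show Finset.univ.filter (fun i' => f i' = f i) = fib f (f i) from rfl] at this
  omega

lemma insert_sub {i i' : Fin (3*m)} (hlt : i < i') (hf : f i = f i') :
    insert i (prd f i) ⊆ prd f i' := by
  intro x hx
  rcases Finset.mem_insert.mp hx with rfl | hx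
  · simp [prd, hf, hlt]
  · simp [prd] at hx ⊢
    exact ⟨hx.1.trans hf, hx.2.trans hlt⟩

lemma i_not_mem_prd (i : Fin (3*m)) : i ∉ prd f i := by simp [prd]

lemma rk_lt {i i' : Fin (3*m)} (hlt : i < i') (hf : f i = f i') : rk f i < rk f i' := by
  have := Finset.card_le_card (insert_sub f hlt hf)
  rw [Finset.card_insert_of_notMem (i_not_mem_prd f i)] at this
  unfold rk
  omega

lemma off_block {i i' : Fin (3*m)} (hlt : i < i') (hf : f i = f i') :
    off s f i + s i ≤ off s f i' := by
  have h1 : off s f i + s i = ∑ x ∈ insert i (prd f i), s x := by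
    rw [Finset.sum_insert (i_not_mem_prd f i), off]; ring
  rw [h1, off]
  exact Finset.sum_le_sum_of_subset (insert_sub f hlt hf)

include hfs in
lemma off_add_le (i : Fin (3*m)) : off s f i + s i ≤ B := by
  have h1 : off s f i + s i = ∑ x ∈ insert i (prd f i), s x := by
    rw [Finset.sum_insert (i_not_mem_prd f i), off]; ring
  have h2 : insert i (prd f i) ⊆ fib f (f i) := by
    intro x hx
    rcases Finset.mem_insert.mp hx with rfl | hx
    · simp [fib]
    · exact (Finset.mem_sdiff.mp (prd_sub f i hx)).1
  rw [h1]
  calc ∑ x ∈ insert i (prd f i), s x ≤ ∑ x ∈ fib f (f i), s x :=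
        Finset.sum_le_sum_of_subset h2
    _ = B := hfs (f i)

lemma rk_inj {i i' : Fin (3*m)} (hne : i ≠ i') (hf : f i = f i') : rk f i ≠ rk f i' := by
  rcases lt_or_gt_of_ne hne with h | h
  · exact Nat.ne_of_lt (rk_lt f h hf)
  · exact (Nat.ne_of_lt (rk_lt f h hf.symm)).symm

include hf3 in
lemma rk_surj (j : Fin m) (t : ℕ) (ht : t < 3) : ∃ i, f i = j ∧ rk f i = t := by
  have := Finset.surj_on_of_inj_on_of_card_le (s := fib f j) (t := Finset.range 3)
    (fun i _ => rk f i)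
    (fun i hi => by
      simp only [Finset.mem_range]
      have : rk f i ≤ 2 := rk_le f hf3 i
      omega)
    (fun i1 i2 h1 h2 he => by
      by_contra hne
      simp [fib] at h1 h2
      exact rk_inj f hne (h1.trans h2.symm) he)
    (by rw [Finset.card_range]; rw [show fib f j = Finset.univ.filter (fun i => f i = j) from rfl, hf3 j])
    t (Finset.mem_range.mpr ht)
  obtain ⟨i, hi, he⟩ := this
  simp [fib] at hi
  exact ⟨i, hi, he.symm⟩

include hf3 hfs in
lemma off_surj (j : Fin m) (v : ℕ) (hv : v < B) :
    ∃ i r, f i = j ∧ r < s i ∧ off s f i + r = v := by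
  have := Finset.surj_on_of_inj_on_of_card_le
    (s := (fib f j).sigma (fun i => Finset.range (s i))) (t := Finset.range B)
    (fun p _ => off s f p.1 + p.2)
    (fun p hp => by
      rw [Finset.mem_sigma] at hp
      simp only [Finset.mem_range] at hp ⊢
      have := off_add_le s f hfs p.1
      omega)
    (fun p1 p2 h1 h2 he => by
      rw [Finset.mem_sigma] at h1 h2
      simp only [Finset.mem_range] at h1 h2
      simp [fib] at h1 h2
      rcases lt_trichotomy p1.1 p2.1 with h | h | h
      · have := off_block s f h (h1.1.trans h2.1.symm)
        omega
      · have hoff : off s f p1.1 = off s f p2.1 := by rw [h]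
        have hr : p1.2 = p2.2 := by omega
        exact Sigma.ext h (heq_of_eq hr)
      · have := off_block s f h (h2.1.trans h1.1.symm)
        omega)
    (by
      rw [Finset.card_range, Finset.card_sigma]
      simp only [Finset.card_range]
      rw [show fib f j = Finset.univ.filter (fun i => f i = j) from rfl]
      rw [hfs j])
    v (Finset.mem_range.mpr hv)
  obtain ⟨⟨i, r⟩, hp, he⟩ := this
  rw [Finset.mem_sigma] at hp
  simp [fib] at hp
  exact ⟨i, r, hp.1, hp.2, he.symm⟩

end Fiber

section Sched
variable {m B : ℕ}

def sched (m B : ℕ) (s : Fin (3*m) → ℕ) (f : Fin (3*m) → Fin m) (n k : ℕ) : ℕ :=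
  if n = 0 then 2*k+1
  else if h : n - 1 < 3*m then
    2 * (slotLen B * (f ⟨n-1, h⟩).val + (if k = 0 then 2*(rk f ⟨n-1, h⟩)+1
      else if k ≤ s ⟨n-1, h⟩ then 7 + 2*(off s f ⟨n-1, h⟩ + (k-1))
      else 7 + 2*B + 2*(rk f ⟨n-1, h⟩)))
  else if n = 3*m+1 then 2 * (slotLen B * (k/3) + 2*(k%3))
  else if n = 3*m+2 then 2 * (slotLen B * (k/B) + 6 + 2*(k%B))
  else 2 * (slotLen B * (k/3) + 6 + 2*B + 2*(k%3))

variable (s : Fin (3*m) → ℕ) (f : Fin (3*m) → Fin m)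

lemma sched_0 (k : ℕ) : sched m B s f 0 k = 2*k+1 := by simp [sched]

lemma sched_Pa (i : Fin (3*m)) (k : ℕ) :
    sched m B s f (1+i.val) k =
      2 * (slotLen B * (f i).val + (if k = 0 then 2*(rk f i)+1
        else if k ≤ s i then 7 + 2*(off s f i + (k-1))
        else 7 + 2*B + 2*(rk f i))) := by
  have h : 1 + i.val - 1 < 3*m := by have := i.isLt; omega
  have he : (⟨1+i.val-1, h⟩ : Fin (3*m)) = i := by ext; simp
  rw [sched, if_neg (by omega), dif_pos h, he]

lemma sched_A (k : ℕ) :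
    sched m B s f (3*m+1) k = 2 * (slotLen B * (k/3) + 2*(k%3)) := by
  rw [sched, if_neg (by omega), dif_neg (by omega), if_pos rfl]

lemma sched_B (k : ℕ) :
    sched m B s f (3*m+2) k = 2 * (slotLen B * (k/B) + (6 + 2*(k%B))) := by
  rw [sched, if_neg (by omega), dif_neg (by omega), if_neg (by omega), if_pos rfl]
  ring

lemma sched_C (k : ℕ) :
    sched m B s f (3*m+3) k = 2 * (slotLen B * (k/3) + (6 + 2*B + 2*(k%3))) := by
  rw [sched, if_neg (by omega), dif_neg (by omega), if_neg (by omega), if_neg (by omega)]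
  ring

lemma sched_even (n k : ℕ) (hn : n ≠ 0) : ∃ t, sched m B s f n k = 2*t := by
  rw [sched, if_neg hn]
  split_ifs <;> exact ⟨_, rfl⟩

lemma slot_decomp {j u j' u' : ℕ} (hu : u < slotLen B) (hu' : u' < slotLen B)
    (h : slotLen B * j + u = slotLen B * j' + u') : j = j' ∧ u = u' := by
  have hW : 0 < slotLen B := by simp [slotLen]
  have h1 : (slotLen B * j + u) / slotLen B = j := by
    rw [Nat.mul_add_div hW, Nat.div_eq_of_lt hu]
    omega
  have h2 : (slotLen B * j' + u') / slotLen B = j' := by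
    rw [Nat.mul_add_div hW, Nat.div_eq_of_lt hu']
    omega
  have hj : j = j' := by rw [← h1, ← h2, h]
  subst hj
  refine ⟨rfl, ?_⟩
  generalize slotLen B * j = X at h
  omega

end Sched

lemma aux_mono {W d a k k' : ℕ} (hd : 0 < d) (hk : k < k') (hbound : a + 2*(d-1) < W) :
    W * (k/d) + (a + 2*(k%d)) < W * (k'/d) + (a + 2*(k'%d)) := by
  have hdiv : k/d ≤ k'/d := Nat.div_le_div_right hk.le
  have hm1 : k % d < d := Nat.mod_lt _ hd
  have hm2 : k' % d < d := Nat.mod_lt _ hd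
  rcases eq_or_lt_of_le hdiv with he | hl
  · have heq : W * (k/d) = W * (k'/d) := by rw [he]
    rw [heq]
    have e1 := Nat.div_add_mod k d
    have e2 := Nat.div_add_mod k' d
    rw [he] at e1
    omega
  · calc W*(k/d) + (a + 2*(k%d)) < W*(k/d) + W := by omega
      _ = W*(k/d + 1) := by ring
      _ ≤ W*(k'/d) := Nat.mul_le_mul le_rfl (by omega)
      _ ≤ _ := Nat.le_add_right _ _

lemma pos_cases {m B : ℕ} (s : Fin (3*m) → ℕ) (p : Pos (reductionTrace m B s)) :
    (p.1.val = 0 ∧ p.2.val < m * slotLen B) ∨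
    (∃ i : Fin (3*m), p.1.val = 1 + i.val ∧ p.2.val < s i + 2) ∨
    (p.1.val = 3*m+1 ∧ p.2.val < 3*m) ∨
    (p.1.val = 3*m+2 ∧ p.2.val < m*B) ∨
    (p.1.val = 3*m+3 ∧ p.2.val < 3*m) := by
  have hlen : p.1.val < 3*m+4 := lt_of_lt_of_eq p.1.isLt (trace_len s)
  by_cases h0 : p.1.val = 0
  · left
    refine ⟨h0, ?_⟩
    have hg : (reductionTrace m B s)[p.1.val]? = some (P0 m B) := by rw [h0]; exact trace_get0 s
    have := pos_len p _ hg
    rwa [P0_len] at this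
  · by_cases h1 : p.1.val ≤ 3*m
    · right; left
      refine ⟨⟨p.1.val - 1, by omega⟩, by simp; omega, ?_⟩
      have hg : (reductionTrace m B s)[p.1.val]? = some (Pa (s ⟨p.1.val - 1, by omega⟩)) := by
        have hidx : p.1.val = 1 + (⟨p.1.val - 1, by omega⟩ : Fin (3*m)).val := by simp; omega
        conv_lhs => rw [hidx]
        exact trace_getPa s _
      have := pos_len p _ hg
      rwa [Pa_len] at this
    · right; right
      by_cases h2 : p.1.val = 3*m+1
      · left
        refine ⟨h2, ?_⟩
        have hg : (reductionTrace m B s)[p.1.val]? = some (List.replicate (3*m) (Wr va)) := by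
          rw [h2]; exact trace_getA s
        have := pos_len p _ hg
        rwa [List.length_replicate] at this
      · right
        by_cases h3 : p.1.val = 3*m+2
        · left
          refine ⟨h3, ?_⟩
          have hg : (reductionTrace m B s)[p.1.val]? = some (List.replicate (m*B) (Wr vb)) := by
            rw [h3]; exact trace_getB s
          have := pos_len p _ hg
          rwa [List.length_replicate] at this
        · right
          have h4 : p.1.val = 3*m+3 := by omega
          refine ⟨h4, ?_⟩
          have hg : (reductionTrace m B s)[p.1.val]? = some (List.replicate (3*m) (Wr vc)) := by
            rw [h4]; exact trace_getC s
          have := pos_len p _ hg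
          rwa [List.length_replicate] at this

lemma pos_ext {procs : List (List Op)} {p q : Pos procs}
    (h1 : p.1.val = q.1.val) (h2 : p.2.val = q.2.val) : p = q := by
  obtain ⟨i, k⟩ := p
  obtain ⟨i', k'⟩ := q
  have hi : i = i' := Fin.ext h1
  subst hi
  have hk : k = k' := Fin.ext h2
  rw [hk]

lemma slotOp_isRead (B u : ℕ) : (slotOp B u).isRead = true := by
  unfold slotOp; split_ifs <;> rfl

lemma slotOp_var (B u : ℕ) : (slotOp B u).var = 0 := by
  unfold slotOp; split_ifs <;> rfl

section Inj
variable {m B : ℕ} (s : Fin (3*m) → ℕ) (f : Fin (3*m) → Fin m)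
variable (hf3 : ∀ j : Fin m, (Finset.univ.filter (fun i => f i = j)).card = 3)
variable (hfs : ∀ j : Fin m, ∑ i ∈ Finset.univ.filter (fun i => f i = j), s i = B)

include hf3 hfs in
lemma E_lt (i : Fin (3*m)) (k : ℕ) (hk : k < s i + 2) :
    (if k = 0 then 2*(rk f i)+1 else if k ≤ s i then 7 + 2*(off s f i + (k-1))
      else 7+2*B+2*(rk f i)) < slotLen B := by
  have h1 := rk_le f hf3 i
  have h2 := off_add_le s f hfs i
  have hWe : slotLen B = 2*B+12 := rfl
  split_ifs <;> omega

include hf3 hfs in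
lemma sched_inj (hB3 : 3 ≤ B) {n k n' k' : ℕ}
    (hn : (n = 0 ∧ k < m * slotLen B) ∨ (∃ i : Fin (3*m), n = 1 + i.val ∧ k < s i + 2) ∨
      (n = 3*m+1 ∧ k < 3*m) ∨ (n = 3*m+2 ∧ k < m*B) ∨ (n = 3*m+3 ∧ k < 3*m))
    (hn' : (n' = 0 ∧ k' < m * slotLen B) ∨ (∃ i : Fin (3*m), n' = 1 + i.val ∧ k' < s i + 2) ∨
      (n' = 3*m+1 ∧ k' < 3*m) ∨ (n' = 3*m+2 ∧ k' < m*B) ∨ (n' = 3*m+3 ∧ k' < 3*m))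
    (h : sched m B s f n k = sched m B s f n' k') : n = n' ∧ k = k' := by
  have hWe : slotLen B = 2*B+12 := rfl
  have hB0 : 0 < B := by omega
  rcases hn with ⟨hn0, hkb⟩ | ⟨i, hn0, hkb⟩ | ⟨hn0, hkb⟩ | ⟨hn0, hkb⟩ | ⟨hn0, hkb⟩ <;>
    rcases hn' with ⟨hn0', hkb'⟩ | ⟨i', hn0', hkb'⟩ | ⟨hn0', hkb'⟩ | ⟨hn0', hkb'⟩ | ⟨hn0', hkb'⟩ <;>
    subst hn0 <;> subst hn0' <;>
    simp only [sched_0, sched_Pa, sched_A, sched_B, sched_C] at h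
  -- (0,0)
  · omega
  -- (0, Pa)
  · split_ifs at h <;> omega
  · omega
  · omega
  · omega
  -- (Pa, 0)
  · split_ifs at h <;> omega
  -- (Pa, Pa)
  · have hin : slotLen B * (f i).val + (if k = 0 then 2*(rk f i)+1 else if k ≤ s i then
        7 + 2*(off s f i + (k-1)) else 7+2*B+2*(rk f i))
        = slotLen B * (f i').val + (if k' = 0 then 2*(rk f i')+1 else if k' ≤ s i' then
        7 + 2*(off s f i' + (k'-1)) else 7+2*B+2*(rk f i')) := by omega
    obtain ⟨hj, hu⟩ := slot_decomp (E_lt s f hf3 hfs i k hkb) (E_lt s f hf3 hfs i' k' hkb') hin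
    have hfi : f i = f i' := Fin.ext hj
    have hrk := rk_le f hf3 i
    have hrk' := rk_le f hf3 i'
    have hof := off_add_le s f hfs i
    have hof' := off_add_le s f hfs i'
    split_ifs at hu with e1 e2 e3 e4 e5 e6
    · -- k=0, k'=0
      have hieq : i = i' := by
        by_contra hne
        exact rk_inj f hne hfi (by omega)
      exact ⟨by rw [hieq], by omega⟩
    · omega
    · omega
    · omega
    · -- mid, mid
      by_cases hieq : i = i'
      · subst hieq
        exact ⟨rfl, by omega⟩
      · rcases lt_or_gt_of_ne hieq with hlt | hlt
        · have := off_block s f hlt hfi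
          omega
        · have := off_block s f hlt hfi.symm
          omega
    · omega
    · omega
    · omega
    · -- end, end
      have hieq : i = i' := by
        by_contra hne
        exact rk_inj f hne hfi (by omega)
      subst hieq
      exact ⟨rfl, by omega⟩
  -- (Pa, A)
  · have hin : slotLen B * (f i).val + (if k = 0 then 2*(rk f i)+1 else if k ≤ s i then
        7 + 2*(off s f i + (k-1)) else 7+2*B+2*(rk f i))
        = slotLen B * (k'/3) + 2*(k'%3) := by omega
    obtain ⟨hj, hu⟩ := slot_decomp (E_lt s f hf3 hfs i k hkb) (by omega) hin
    split_ifs at hu <;> omega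
  -- (Pa, B)
  · have hin : slotLen B * (f i).val + (if k = 0 then 2*(rk f i)+1 else if k ≤ s i then
        7 + 2*(off s f i + (k-1)) else 7+2*B+2*(rk f i))
        = slotLen B * (k'/B) + (6 + 2*(k'%B)) := by omega
    have hmo : k' % B < B := Nat.mod_lt _ hB0
    obtain ⟨hj, hu⟩ := slot_decomp (E_lt s f hf3 hfs i k hkb) (by omega) hin
    split_ifs at hu <;> omega
  -- (Pa, C)
  · have hin : slotLen B * (f i).val + (if k = 0 then 2*(rk f i)+1 else if k ≤ s i then
        7 + 2*(off s f i + (k-1)) else 7+2*B+2*(rk f i))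
        = slotLen B * (k'/3) + (6 + 2*B + 2*(k'%3)) := by omega
    have hrk := rk_le f hf3 i
    have hof := off_add_le s f hfs i
    obtain ⟨hj, hu⟩ := slot_decomp (E_lt s f hf3 hfs i k hkb) (by omega) hin
    split_ifs at hu <;> omega
  -- (A, 0)
  · omega
  -- (A, Pa)
  · have hin : slotLen B * (k/3) + 2*(k%3)
        = slotLen B * (f i').val + (if k' = 0 then 2*(rk f i')+1 else if k' ≤ s i' then
        7 + 2*(off s f i' + (k'-1)) else 7+2*B+2*(rk f i')) := by omega
    obtain ⟨hj, hu⟩ := slot_decomp (by omega) (E_lt s f hf3 hfs i' k' hkb') hin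
    split_ifs at hu <;> omega
  -- (A, A)
  · have hin : slotLen B * (k/3) + 2*(k%3) = slotLen B * (k'/3) + 2*(k'%3) := by omega
    obtain ⟨hj, hu⟩ := slot_decomp (by omega) (by omega) hin
    exact ⟨rfl, by omega⟩
  -- (A, B)
  · have hin : slotLen B * (k/3) + 2*(k%3) = slotLen B * (k'/B) + (6 + 2*(k'%B)) := by omega
    have hmo : k' % B < B := Nat.mod_lt _ hB0
    obtain ⟨hj, hu⟩ := slot_decomp (by omega) (by omega) hin
    omega
  -- (A, C)
  · have hin : slotLen B * (k/3) + 2*(k%3) = slotLen B * (k'/3) + (6 + 2*B + 2*(k'%3)) := by omega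
    obtain ⟨hj, hu⟩ := slot_decomp (by omega) (by omega) hin
    omega
  -- (B, 0)
  · omega
  -- (B, Pa)
  · have hin : slotLen B * (k/B) + (6 + 2*(k%B))
        = slotLen B * (f i').val + (if k' = 0 then 2*(rk f i')+1 else if k' ≤ s i' then
        7 + 2*(off s f i' + (k'-1)) else 7+2*B+2*(rk f i')) := by omega
    have hmo : k % B < B := Nat.mod_lt _ hB0
    obtain ⟨hj, hu⟩ := slot_decomp (by omega) (E_lt s f hf3 hfs i' k' hkb') hin
    split_ifs at hu <;> omega
  -- (B, A)
  · have hin : slotLen B * (k/B) + (6 + 2*(k%B)) = slotLen B * (k'/3) + 2*(k'%3) := by omega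
    have hmo : k % B < B := Nat.mod_lt _ hB0
    obtain ⟨hj, hu⟩ := slot_decomp (by omega) (by omega) hin
    omega
  -- (B, B)
  · have hin : slotLen B * (k/B) + (6 + 2*(k%B)) = slotLen B * (k'/B) + (6 + 2*(k'%B)) := by omega
    have hmo : k % B < B := Nat.mod_lt _ hB0
    have hmo' : k' % B < B := Nat.mod_lt _ hB0
    obtain ⟨hj, hu⟩ := slot_decomp (by omega) (by omega) hin
    have hj2 : B * (k/B) = B * (k'/B) := by rw [hj]
    have e1 := Nat.div_add_mod k B
    have e2 := Nat.div_add_mod k' B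
    exact ⟨rfl, by omega⟩
  -- (B, C)
  · have hin : slotLen B * (k/B) + (6 + 2*(k%B)) = slotLen B * (k'/3) + (6 + 2*B + 2*(k'%3)) := by
      omega
    have hmo : k % B < B := Nat.mod_lt _ hB0
    obtain ⟨hj, hu⟩ := slot_decomp (by omega) (by omega) hin
    omega
  -- (C, 0)
  · omega
  -- (C, Pa)
  · have hin : slotLen B * (k/3) + (6 + 2*B + 2*(k%3))
        = slotLen B * (f i').val + (if k' = 0 then 2*(rk f i')+1 else if k' ≤ s i' then
        7 + 2*(off s f i' + (k'-1)) else 7+2*B+2*(rk f i')) := by omega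
    have hrk := rk_le f hf3 i'
    have hof := off_add_le s f hfs i'
    obtain ⟨hj, hu⟩ := slot_decomp (by omega) (E_lt s f hf3 hfs i' k' hkb') hin
    split_ifs at hu <;> omega
  -- (C, A)
  · have hin : slotLen B * (k/3) + (6 + 2*B + 2*(k%3)) = slotLen B * (k'/3) + 2*(k'%3) := by omega
    obtain ⟨hj, hu⟩ := slot_decomp (by omega) (by omega) hin
    omega
  -- (C, B)
  · have hin : slotLen B * (k/3) + (6 + 2*B + 2*(k%3)) = slotLen B * (k'/B) + (6 + 2*(k'%B)) := by
      omega
    have hmo : k' % B < B := Nat.mod_lt _ hB0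
    obtain ⟨hj, hu⟩ := slot_decomp (by omega) (by omega) hin
    omega
  -- (C, C)
  · have hin : slotLen B * (k/3) + (6 + 2*B + 2*(k%3)) = slotLen B * (k'/3) + (6 + 2*B + 2*(k'%3)) := by
      omega
    obtain ⟨hj, hu⟩ := slot_decomp (by omega) (by omega) hin
    exact ⟨rfl, by omega⟩

end Inj

/-- Completeness of the reduction: if the Unary 3-Partition instance admits a
partition into `m` triples each summing to `B`, then the constructed trace admits a
legal schedule respecting program order. -/
theorem stmt10 (m B : ℕ) (s : Fin (3 * m) → ℕ) (hm : 0 < m)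
    (hsize : ∀ i, B < 4 * s i ∧ 2 * s i < B)
    (hsum : ∑ i, s i = m * B)
    (hsol : ThreePartSol m B s) :
    ∃ σ : Pos (reductionTrace m B s) → ℕ, LegalSched (reductionTrace m B s) σ := by
  obtain ⟨f, hf3, hfs⟩ := hsol
  have hB3 : 3 ≤ B := by have := hsize ⟨0, by omega⟩; omega
  have hB0 : 0 < B := by omega
  have hs1 : ∀ i, 1 ≤ s i := fun i => by have := hsize i; omega
  have hWe : slotLen B = 2*B+12 := rfl
  have hW0 : 0 < slotLen B := by omega
  refine ⟨fun p => sched m B s f p.1.val p.2.val, ?_, ?_, ?_⟩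
  · -- injectivity
    intro p q h
    simp only at h
    obtain ⟨h1, h2⟩ := sched_inj s f hf3 hfs hB3 (pos_cases s p) (pos_cases s q) h
    exact pos_ext h1 h2
  · -- program order
    intro p q hpq hlt
    simp only
    rcases pos_cases s q with ⟨h0, hk⟩ | ⟨i, hn, hk⟩ | ⟨h0, hk⟩ | ⟨h0, hk⟩ | ⟨h0, hk⟩
    · rw [hpq, h0, sched_0, sched_0]; omega
    · rw [hpq, hn, sched_Pa, sched_Pa]
      have hrk := rk_le f hf3 i
      have hoff := off_add_le s f hfs i
      have hsi := hs1 i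
      split_ifs <;> omega
    · rw [hpq, h0, sched_A, sched_A]
      have := aux_mono (W := slotLen B) (d := 3) (a := 0) (k := p.2.val) (k' := q.2.val)
        (by norm_num) hlt (by omega)
      omega
    · rw [hpq, h0, sched_B, sched_B]
      have := aux_mono (W := slotLen B) (d := B) (a := 6) (k := p.2.val) (k' := q.2.val)
        hB0 hlt (by omega)
      omega
    · rw [hpq, h0, sched_C, sched_C]
      have := aux_mono (W := slotLen B) (d := 3) (a := 6+2*B) (k := p.2.val) (k' := q.2.val)
        (by norm_num) hlt (by omega)
      omega
  · -- reads
    intro p hread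
    rcases pos_cases s p with ⟨h0, hkP⟩ | ⟨i, hn, hk⟩ | ⟨h0, hk⟩ | ⟨h0, hk⟩ | ⟨h0, hk⟩
    · -- p is a read in P0
      have hg0 : (reductionTrace m B s)[p.1.val]? = some (P0 m B) := by
        conv_lhs => rw [h0]
        exact trace_get0 s
      have hop : opAt p = slotOp B (p.2.val % slotLen B) :=
        opAt_eq p _ hg0 _ (P0_getElem? m B _ hkP)
      obtain ⟨j, u, huW, hjm, hkeq⟩ :
          ∃ j u, u < slotLen B ∧ j < m ∧ slotLen B * j + u = p.2.val :=
        ⟨p.2.val / slotLen B, p.2.val % slotLen B, Nat.mod_lt _ hW0,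
          by rw [Nat.div_lt_iff_lt_mul hW0]; omega, Nat.div_add_mod _ _⟩
      have hmod : p.2.val % slotLen B = u := by
        rw [← hkeq, Nat.mul_add_mod, Nat.mod_eq_of_lt huW]
      rw [hmod] at hop
      have hσp : sched m B s f p.1.val p.2.val = 2*p.2.val+1 := by rw [h0, sched_0]
      have key : ∃ q : Pos (reductionTrace m B s), (opAt q).isRead = false ∧
          (opAt q).var = 0 ∧ (opAt q).val = (slotOp B u).val ∧
          sched m B s f q.1.val q.2.val = 2*p.2.val := by
        by_cases hu6 : u < 6
        · obtain ⟨t, ht3, hte⟩ : ∃ t, t < 3 ∧ (u = 2*t ∨ u = 2*t+1) :=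
            ⟨u/2, by omega, by omega⟩
          rcases hte with rfl | rfl
          · -- open, even: aux Wxa
            have hnlt : 3*m+1 < (reductionTrace m B s).length := by rw [trace_len]; omega
            have hklt : 3*j+t < ((reductionTrace m B s).get ⟨3*m+1, hnlt⟩).length := by
              rw [proc_at _ _ _ (trace_getA s), List.length_replicate]; omega
            refine ⟨⟨⟨3*m+1, hnlt⟩, ⟨3*j+t, hklt⟩⟩, ?_⟩
            have hoq : opAt (⟨⟨3*m+1, hnlt⟩, ⟨3*j+t, hklt⟩⟩ : Pos (reductionTrace m B s)) = Wr va :=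
              opAt_eq _ _ (trace_getA s) _
                (by show (List.replicate (3*m) (Wr va))[3*j+t]? = some (Wr va)
                    rw [List.getElem?_replicate, if_pos (show 3*j+t < 3*m by omega)])
            refine ⟨by rw [hoq]; rfl, by rw [hoq]; rfl, ?_, ?_⟩
            · rw [hoq, show slotOp B (2*t) = Rd va from by
                have h2 : (2*t) % 2 = 0 := by omega
                simp [slotOp, hu6, h2]]
              rfl
            · show sched m B s f (3*m+1) (3*j+t) = 2*p.2.val
              rw [sched_A]
              have hd : (3*j+t)/3 = j := by omega
              have hm3 : (3*j+t)%3 = t := by omega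
              rw [hd, hm3]; omega
          · -- open, odd: Wxa' of process i with rank t
            obtain ⟨i, hfi, hrkt⟩ := rk_surj f hf3 ⟨j, hjm⟩ t ht3
            have hnlt : 1+i.val < (reductionTrace m B s).length := by
              rw [trace_len]; have := i.isLt; omega
            have hklt : 0 < ((reductionTrace m B s).get ⟨1+i.val, hnlt⟩).length := by
              rw [proc_at _ _ _ (trace_getPa s i), Pa_len]; omega
            refine ⟨⟨⟨1+i.val, hnlt⟩, ⟨0, hklt⟩⟩, ?_⟩
            have hoq : opAt (⟨⟨1+i.val, hnlt⟩, ⟨0, hklt⟩⟩ : Pos (reductionTrace m B s)) = Wr va' :=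
              opAt_eq _ _ (trace_getPa s i) _
                (by show (Pa (s i))[0]? = some (Wr va')
                    rw [Pa_getElem? _ _ (by omega)]; simp)
            refine ⟨by rw [hoq]; rfl, by rw [hoq]; rfl, ?_, ?_⟩
            · rw [hoq, show slotOp B (2*t+1) = Rd va' from by
                have h2 : (2*t+1) % 2 = 1 := by omega
                simp [slotOp, hu6, h2]]
              rfl
            · show sched m B s f (1+i.val) 0 = 2*p.2.val
              rw [sched_Pa]
              rw [if_pos rfl]
              have hj' : (f i).val = j := by rw [hfi]
              rw [hj', hrkt]; omega
        · by_cases husum : u < 6+2*B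
          · obtain ⟨v, hvB, hve⟩ : ∃ v, v < B ∧ (u = 6+2*v ∨ u = 7+2*v) :=
              ⟨(u-6)/2, by omega, by omega⟩
            rcases hve with rfl | rfl
            · -- sum, even: aux Wxb
              have hnlt : 3*m+2 < (reductionTrace m B s).length := by rw [trace_len]; omega
              have hkb : B*j+v < m*B := by
                have h1 : B*(j+1) ≤ B*m := Nat.mul_le_mul le_rfl (by omega)
                have h2 : B*(j+1) = B*j + B := Nat.mul_succ B j
                have h3 : B*m = m*B := Nat.mul_comm B m
                omega
              have hklt : B*j+v < ((reductionTrace m B s).get ⟨3*m+2, hnlt⟩).length := by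
                rw [proc_at _ _ _ (trace_getB s), List.length_replicate]; exact hkb
              refine ⟨⟨⟨3*m+2, hnlt⟩, ⟨B*j+v, hklt⟩⟩, ?_⟩
              have hoq : opAt (⟨⟨3*m+2, hnlt⟩, ⟨B*j+v, hklt⟩⟩ : Pos (reductionTrace m B s)) = Wr vb :=
                opAt_eq _ _ (trace_getB s) _
                  (by show (List.replicate (m*B) (Wr vb))[B*j+v]? = some (Wr vb)
                      rw [List.getElem?_replicate, if_pos hkb])
              refine ⟨by rw [hoq]; rfl, by rw [hoq]; rfl, ?_, ?_⟩
              · rw [hoq, show slotOp B (6+2*v) = Rd vb from by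
                  have h2 : (6+2*v) % 2 = 0 := by omega
                  simp [slotOp, hu6, husum, h2]]
                rfl
              · show sched m B s f (3*m+2) (B*j+v) = 2*p.2.val
                rw [sched_B]
                have hd : (B*j+v)/B = j := by
                  rw [Nat.mul_add_div hB0, Nat.div_eq_of_lt hvB]
                  omega
                have hm' : (B*j+v)%B = v := by
                  rw [Nat.mul_add_mod, Nat.mod_eq_of_lt hvB]
                rw [hd, hm']; omega
            · -- sum, odd: Wxb' of process i covering v
              obtain ⟨i, r, hfi, hrs, hov⟩ := off_surj s f hf3 hfs ⟨j, hjm⟩ v hvB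
              have hnlt : 1+i.val < (reductionTrace m B s).length := by
                rw [trace_len]; have := i.isLt; omega
              have hklt : 1+r < ((reductionTrace m B s).get ⟨1+i.val, hnlt⟩).length := by
                rw [proc_at _ _ _ (trace_getPa s i), Pa_len]; omega
              refine ⟨⟨⟨1+i.val, hnlt⟩, ⟨1+r, hklt⟩⟩, ?_⟩
              have hoq : opAt (⟨⟨1+i.val, hnlt⟩, ⟨1+r, hklt⟩⟩ : Pos (reductionTrace m B s)) = Wr vb' :=
                opAt_eq _ _ (trace_getPa s i) _
                  (by show (Pa (s i))[1+r]? = some (Wr vb')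
                      rw [Pa_getElem? _ _ (by omega)]
                      rw [if_neg (by omega), if_pos (by omega)])
              refine ⟨by rw [hoq]; rfl, by rw [hoq]; rfl, ?_, ?_⟩
              · rw [hoq, show slotOp B (7+2*v) = Rd vb' from by
                  have h2 : (7+2*v) % 2 = 1 := by omega
                  simp [slotOp, hu6, husum, h2]]
                rfl
              · show sched m B s f (1+i.val) (1+r) = 2*p.2.val
                rw [sched_Pa]
                rw [if_neg (by omega), if_pos (by omega)]
                have hj' : (f i).val = j := by rw [hfi]
                rw [hj']
                have : 1 + r - 1 = r := by omega
                rw [this]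
                omega
          · obtain ⟨t, ht3, hte⟩ : ∃ t, t < 3 ∧ (u = 6+2*B+2*t ∨ u = 7+2*B+2*t) :=
              ⟨(u-(6+2*B))/2, by omega, by omega⟩
            rcases hte with rfl | rfl
            · -- close, even: aux Wxc
              have hnlt : 3*m+3 < (reductionTrace m B s).length := by rw [trace_len]; omega
              have hklt : 3*j+t < ((reductionTrace m B s).get ⟨3*m+3, hnlt⟩).length := by
                rw [proc_at _ _ _ (trace_getC s), List.length_replicate]; omega
              refine ⟨⟨⟨3*m+3, hnlt⟩, ⟨3*j+t, hklt⟩⟩, ?_⟩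
              have hoq : opAt (⟨⟨3*m+3, hnlt⟩, ⟨3*j+t, hklt⟩⟩ : Pos (reductionTrace m B s)) = Wr vc :=
                opAt_eq _ _ (trace_getC s) _
                  (by show (List.replicate (3*m) (Wr vc))[3*j+t]? = some (Wr vc)
                      rw [List.getElem?_replicate, if_pos (show 3*j+t < 3*m by omega)])
              refine ⟨by rw [hoq]; rfl, by rw [hoq]; rfl, ?_, ?_⟩
              · rw [hoq, show slotOp B (6+2*B+2*t) = Rd vc from by
                  have h2 : (6+2*B+2*t) % 2 = 0 := by omega
                  simp [slotOp, hu6, husum, h2]]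
                rfl
              · show sched m B s f (3*m+3) (3*j+t) = 2*p.2.val
                rw [sched_C]
                have hd : (3*j+t)/3 = j := by omega
                have hm3 : (3*j+t)%3 = t := by omega
                rw [hd, hm3]; omega
            · -- close, odd: Wxc' of process i with rank t
              obtain ⟨i, hfi, hrkt⟩ := rk_surj f hf3 ⟨j, hjm⟩ t ht3
              have hnlt : 1+i.val < (reductionTrace m B s).length := by
                rw [trace_len]; have := i.isLt; omega
              have hklt : s i + 1 < ((reductionTrace m B s).get ⟨1+i.val, hnlt⟩).length := by
                rw [proc_at _ _ _ (trace_getPa s i), Pa_len]; omega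
              refine ⟨⟨⟨1+i.val, hnlt⟩, ⟨s i + 1, hklt⟩⟩, ?_⟩
              have hoq : opAt (⟨⟨1+i.val, hnlt⟩, ⟨s i + 1, hklt⟩⟩ : Pos (reductionTrace m B s)) = Wr vc' :=
                opAt_eq _ _ (trace_getPa s i) _
                  (by show (Pa (s i))[s i + 1]? = some (Wr vc')
                      rw [Pa_getElem? _ _ (by omega)]
                      rw [if_neg (by omega), if_neg (by omega)])
              refine ⟨by rw [hoq]; rfl, by rw [hoq]; rfl, ?_, ?_⟩
              · rw [hoq, show slotOp B (7+2*B+2*t) = Rd vc' from by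
                  have h2 : (7+2*B+2*t) % 2 = 1 := by omega
                  simp [slotOp, hu6, husum, h2]]
                rfl
              · show sched m B s f (1+i.val) (s i + 1) = 2*p.2.val
                rw [sched_Pa]
                rw [if_neg (by omega), if_neg (by omega)]
                have hj' : (f i).val = j := by rw [hfi]
                rw [hj', hrkt]; omega
      obtain ⟨q, hqw, hqvar, hqval, hσq⟩ := key
      refine ⟨q, hqw, ?_, ?_, ?_, ?_⟩
      · simp only
        rw [hσq, hσp]; omega
      · rw [hop, hqvar, slotOp_var]
      · rw [hop, hqval]
      · intro q' hq'w _ hlt1 hlt2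
        simp only at hlt1 hlt2
        rw [hσq] at hlt1
        rw [hσp] at hlt2
        have hq'n : q'.1.val ≠ 0 := by
          intro h00
          have hg0' : (reductionTrace m B s)[q'.1.val]? = some (P0 m B) := by
            conv_lhs => rw [h00]
            exact trace_get0 s
          have hb := pos_len q' _ hg0'
          rw [P0_len] at hb
          have := opAt_eq q' _ hg0' _ (P0_getElem? m B _ hb)
          rw [this, slotOp_isRead] at hq'w
          exact absurd hq'w (by simp)
        obtain ⟨t', ht'⟩ := sched_even s f q'.1.val q'.2.val hq'n
        rw [ht'] at hlt1 hlt2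
        omega
    · -- p in Pa: a write, contradiction
      have hg : (reductionTrace m B s)[p.1.val]? = some (Pa (s i)) := by
        conv_lhs => rw [hn]
        exact trace_getPa s i
      have := opAt_eq p _ hg _ (Pa_getElem? (s i) p.2.val hk)
      rw [this] at hread
      split_ifs at hread <;> simp [Wr] at hread
    · have hg : (reductionTrace m B s)[p.1.val]? = some (List.replicate (3*m) (Wr va)) := by
        conv_lhs => rw [h0]
        exact trace_getA s
      have := opAt_eq p _ hg _ (by rw [List.getElem?_replicate, if_pos hk])
      rw [this] at hread
      simp [Wr] at hread
    · have hg : (reductionTrace m B s)[p.1.val]? = some (List.replicate (m*B) (Wr vb)) := by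
        conv_lhs => rw [h0]
        exact trace_getB s
      have := opAt_eq p _ hg _ (by rw [List.getElem?_replicate, if_pos hk])
      rw [this] at hread
      simp [Wr] at hread
    · have hg : (reductionTrace m B s)[p.1.val]? = some (List.replicate (3*m) (Wr vc)) := by
        conv_lhs => rw [h0]
        exact trace_getC s
      have := opAt_eq p _ hg _ (by rw [List.getElem?_replicate, if_pos hk])
      rw [this] at hread
      simp [Wr] at hread
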